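/- For $k > m$, with notation as in the stability theorem, one has the estimate $\|u^{k,m}\|^2 \le 2T^2 \sup_{1\le k',m'\le M}\|f^{k',m'}\|^2 + 2\|\beta^{k-m}\|^2$, using Parseval's identity, the Cauchy–Schwarz inequality over the $m$ terms of the diagonal sum, and the bounds $\mu_n^{k-m+l,l} \le \mu_n^{k,m}$, $\mu_n^{k-m,0} \le \mu_n^{k,m}$, together with $m\omega \le T$. -/

import Mathlib

/-- The integrating factor `μₙ^{k,m} = exp(λₙ/2 (k+m)ω)` at the grid points. -/
noncomputable def stmt4mu (lam ω : ℝ) (k m : ℕ) : ℝ :=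
  Real.exp (lam / 2 * (((k : ℝ) + (m : ℝ)) * ω))

/-- Parseval: the squared coefficients sum to the squared norm. -/
theorem stmt4_parseval {H : Type*} [NormedAddCommGroup H] [InnerProductSpace ℝ H]
    [CompleteSpace H] (φ : HilbertBasis ℕ ℝ H) (x : H) :
    HasSum (fun n => (inner ℝ x (φ n) : ℝ) ^ 2) (‖x‖ ^ 2) := by
  have h := φ.hasSum_inner_mul_inner x x
  rw [real_inner_self_eq_norm_sq] at h
  have e : (fun n => (inner ℝ x (φ n) : ℝ) ^ 2) = fun i => inner ℝ x (φ i) * inner ℝ (φ i) x := by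
    funext n
    rw [sq, real_inner_comm]
  rw [e]; exact h

set_option maxHeartbeats 1000000 in
/-- the case `k > m` of the stability estimate:
`‖u^{k,m}‖² ≤ 2T² sup ‖f‖² + 2‖β^{k-m}‖²`. -/
theorem stmt4 {H : Type*} [NormedAddCommGroup H] [InnerProductSpace ℝ H]
    [CompleteSpace H] (φ : HilbertBasis ℕ ℝ H) (lam : ℕ → ℝ)
    (hlam : ∀ n, 0 < lam n) (ω T : ℝ) (hω : 0 < ω) (M : ℕ)
    (hM : (M : ℝ) * ω = T) (f : ℕ → ℕ → H) (β : ℕ → H)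
    (k m : ℕ) (hm : 1 ≤ m) (hkm : m < k) (hkM : k ≤ M)
    (u : H)
    (hu : u = ∑' n : ℕ,
      ((ω * ∑ l ∈ Finset.Icc 1 m,
          stmt4mu (lam n) ω (k - m + l) l * (stmt4mu (lam n) ω k m)⁻¹ *
            (inner ℝ (f (k - m + l) l) (φ n) : ℝ))
        + (stmt4mu (lam n) ω k m)⁻¹ * stmt4mu (lam n) ω (k - m) 0 *
            (inner ℝ (β (k - m)) (φ n) : ℝ)) • φ n)
    (F : ℝ)
    (hF : ∀ k' m' : ℕ, 1 ≤ k' → k' ≤ M → 1 ≤ m' → m' ≤ M → ‖f k' m'‖ ^ 2 ≤ F) :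
    ‖u‖ ^ 2 ≤ 2 * T ^ 2 * F + 2 * ‖β (k - m)‖ ^ 2 := by
  classical
  -- abbreviations
  set a : ℕ → ℕ → ℝ := fun l n => (inner ℝ (f (k - m + l) l) (φ n) : ℝ) with ha
  set b : ℕ → ℝ := fun n => (inner ℝ (β (k - m)) (φ n) : ℝ) with hb
  set c : ℕ → ℝ := fun n =>
    (ω * ∑ l ∈ Finset.Icc 1 m,
        stmt4mu (lam n) ω (k - m + l) l * (stmt4mu (lam n) ω k m)⁻¹ * a l n)
      + (stmt4mu (lam n) ω k m)⁻¹ * stmt4mu (lam n) ω (k - m) 0 * b n with hc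
  have hu' : u = ∑' n : ℕ, c n • φ n := hu
  have hcast : ((k - m : ℕ) : ℝ) = (k : ℝ) - (m : ℝ) := by
    rw [Nat.cast_sub hkm.le]
  -- bounds on the exponential ratios
  have hρ : ∀ n l, l ∈ Finset.Icc 1 m →
      stmt4mu (lam n) ω (k - m + l) l * (stmt4mu (lam n) ω k m)⁻¹ ∈ Set.Icc (0:ℝ) 1 := by
    intro n l hl
    obtain ⟨hl1, hl2⟩ := Finset.mem_Icc.mp hl
    constructor
    · unfold stmt4mu; positivity
    · unfold stmt4mu
      rw [← Real.exp_neg, ← Real.exp_add, Real.exp_le_one_iff]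
      have h1 : ((k - m + l : ℕ) : ℝ) + (l : ℝ) ≤ (k : ℝ) + (m : ℝ) := by
        push_cast [hcast]
        have : (l : ℝ) ≤ (m : ℝ) := by exact_mod_cast hl2
        linarith
      have h2 : 0 < lam n / 2 := by linarith [hlam n]
      have h3 := mul_le_mul_of_nonneg_left (mul_le_mul_of_nonneg_right h1 hω.le) h2.le
      linarith
  have hr : ∀ n, (stmt4mu (lam n) ω k m)⁻¹ * stmt4mu (lam n) ω (k - m) 0 ∈ Set.Icc (0:ℝ) 1 := by
    intro n
    constructor
    · unfold stmt4mu; positivity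
    · unfold stmt4mu
      rw [← Real.exp_neg, ← Real.exp_add, Real.exp_le_one_iff]
      have h1 : ((k - m : ℕ) : ℝ) + (0 : ℕ) ≤ (k : ℝ) + (m : ℝ) := by
        push_cast [hcast]
        have : (0:ℝ) ≤ (m:ℝ) := by positivity
        linarith
      have h2 : 0 < lam n / 2 := by linarith [hlam n]
      have h3 := mul_le_mul_of_nonneg_left (mul_le_mul_of_nonneg_right h1 hω.le) h2.le
      linarith
  -- the comparison sequence
  set g : ℕ → ℝ := fun n =>
    2 * ω ^ 2 * m * (∑ l ∈ Finset.Icc 1 m, a l n ^ 2) + 2 * b n ^ 2 with hg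
  -- pointwise bound  c n ^ 2 ≤ g n
  have hkey : ∀ n, c n ^ 2 ≤ g n := by
    intro n
    set S : ℝ := ∑ l ∈ Finset.Icc 1 m,
      stmt4mu (lam n) ω (k - m + l) l * (stmt4mu (lam n) ω k m)⁻¹ * a l n with hS
    set r : ℝ := (stmt4mu (lam n) ω k m)⁻¹ * stmt4mu (lam n) ω (k - m) 0 with hrr
    have hSsq : S ^ 2 ≤ (m : ℝ) * ∑ l ∈ Finset.Icc 1 m, a l n ^ 2 := by
      have h1 : |S| ≤ ∑ l ∈ Finset.Icc 1 m, |a l n| := by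
        refine (Finset.abs_sum_le_sum_abs _ _).trans ?_
        refine Finset.sum_le_sum fun l hl => ?_
        obtain ⟨h0, h1⟩ := hρ n l hl
        rw [abs_mul]
        calc |stmt4mu (lam n) ω (k - m + l) l * (stmt4mu (lam n) ω k m)⁻¹| * |a l n|
            ≤ 1 * |a l n| := by
              apply mul_le_mul_of_nonneg_right _ (abs_nonneg _)
              rwa [abs_of_nonneg h0]
          _ = |a l n| := one_mul _
      have h2 : (∑ l ∈ Finset.Icc 1 m, |a l n|) ^ 2
          ≤ (Finset.Icc 1 m).card * ∑ l ∈ Finset.Icc 1 m, |a l n| ^ 2 :=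
        sq_sum_le_card_mul_sum_sq
      have hcard : ((Finset.Icc 1 m).card : ℝ) = (m : ℝ) := by
        rw [Nat.card_Icc]; norm_num
      calc S ^ 2 = |S| ^ 2 := (sq_abs S).symm
        _ ≤ (∑ l ∈ Finset.Icc 1 m, |a l n|) ^ 2 := by
            apply pow_le_pow_left₀ (abs_nonneg _) h1
        _ ≤ (m : ℝ) * ∑ l ∈ Finset.Icc 1 m, |a l n| ^ 2 := by
            rw [← hcard]; exact_mod_cast h2
        _ = (m : ℝ) * ∑ l ∈ Finset.Icc 1 m, a l n ^ 2 := by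
            congr 1; exact Finset.sum_congr rfl fun l _ => sq_abs _
    have hBsq : (r * b n) ^ 2 ≤ b n ^ 2 := by
      obtain ⟨h0, h1⟩ := hr n
      rw [← hrr] at h0 h1
      have hr2 : r ^ 2 ≤ 1 := by nlinarith
      rw [mul_pow]
      nlinarith [sq_nonneg (b n)]
    have hcn : c n = ω * S + r * b n := rfl
    have h2ab : (ω * S + r * b n) ^ 2 ≤ 2 * (ω * S) ^ 2 + 2 * (r * b n) ^ 2 := by
      nlinarith [sq_nonneg (ω * S - r * b n)]
    calc c n ^ 2 ≤ 2 * (ω * S) ^ 2 + 2 * (r * b n) ^ 2 := by rw [hcn]; exact h2ab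
      _ ≤ 2 * (ω ^ 2 * ((m : ℝ) * ∑ l ∈ Finset.Icc 1 m, a l n ^ 2)) + 2 * b n ^ 2 := by
          have := mul_le_mul_of_nonneg_left hSsq (sq_nonneg ω)
          rw [mul_pow]
          nlinarith
      _ = g n := by rw [hg]; ring
  -- summability of the comparison sequence with explicit sum
  have hfsum : ∀ l ∈ Finset.Icc 1 m,
      HasSum (fun n => a l n ^ 2) (‖f (k - m + l) l‖ ^ 2) := fun l _ =>
    stmt4_parseval φ (f (k - m + l) l)
  have hβsum : HasSum (fun n => b n ^ 2) (‖β (k - m)‖ ^ 2) := stmt4_parseval φ (β (k - m))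
  have hgsum : HasSum g
      (2 * ω ^ 2 * m * (∑ l ∈ Finset.Icc 1 m, ‖f (k - m + l) l‖ ^ 2)
        + 2 * ‖β (k - m)‖ ^ 2) := by
    have h1 : HasSum (fun n => ∑ l ∈ Finset.Icc 1 m, a l n ^ 2)
        (∑ l ∈ Finset.Icc 1 m, ‖f (k - m + l) l‖ ^ 2) :=
      hasSum_sum fun l hl => hfsum l hl
    exact (h1.mul_left (2 * ω ^ 2 * m)).add (hβsum.mul_left 2)
  -- c² is summable by comparison
  have hcnonneg : ∀ n, (0:ℝ) ≤ c n ^ 2 := fun n => sq_nonneg _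
  have hcsq : Summable (fun n => c n ^ 2) :=
    Summable.of_nonneg_of_le hcnonneg hkey hgsum.summable
  -- u lies in the image of ℓ² under the basis, and Parseval for u
  have hc2 : Memℓp c 2 := by
    apply memℓp_gen
    have : (fun n => ‖c n‖ ^ (2 : ENNReal).toReal) = fun n => c n ^ 2 := by
      funext n
      rw [show ((2 : ENNReal)).toReal = ((2:ℕ):ℝ) by norm_num, Real.rpow_natCast, Real.norm_eq_abs, sq_abs]
    rw [this]
    exact hcsq
  set v := (⟨c, hc2⟩ : lp (fun _ : ℕ => ℝ) 2) with hv
  have hveq : ∀ n, v n = c n := fun n => rfl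
  have hxsum : HasSum (fun n => c n • φ n) (φ.repr.symm v) :=
    φ.hasSum_repr_symm v
  have huv : u = φ.repr.symm v := by rw [hu']; exact hxsum.tsum_eq
  have hnorm : ‖u‖ ^ 2 = ∑' n, c n ^ 2 := by
    have h1 : ‖u‖ = ‖v‖ := by rw [huv]; exact φ.repr.symm.norm_map v
    have h2 : ‖v‖ ^ (2 : ENNReal).toReal = ∑' n, ‖v n‖ ^ (2 : ENNReal).toReal :=
      lp.norm_rpow_eq_tsum (by norm_num) v
    rw [show ((2 : ENNReal)).toReal = ((2:ℕ):ℝ) by norm_num] at h2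
    simp only [Real.rpow_natCast] at h2
    rw [h1, h2]
    congr 1
    funext n
    rw [Real.norm_eq_abs, sq_abs]
  -- put everything together
  have hmain : ‖u‖ ^ 2 ≤ 2 * ω ^ 2 * m * (∑ l ∈ Finset.Icc 1 m, ‖f (k - m + l) l‖ ^ 2)
      + 2 * ‖β (k - m)‖ ^ 2 := by
    rw [hnorm, ← hgsum.tsum_eq]
    exact Summable.tsum_le_tsum hkey hcsq hgsum.summable
  -- bound the f part
  have hF0 : 0 ≤ F := le_trans (sq_nonneg _) (hF 1 1 le_rfl (by omega) le_rfl (by omega))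
  have hfF : ∀ l ∈ Finset.Icc 1 m, ‖f (k - m + l) l‖ ^ 2 ≤ F := by
    intro l hl
    obtain ⟨h1, h2⟩ := Finset.mem_Icc.mp hl
    exact hF _ _ (by omega) (by omega) h1 (by omega)
  have hsumF : (∑ l ∈ Finset.Icc 1 m, ‖f (k - m + l) l‖ ^ 2) ≤ (m : ℝ) * F := by
    calc (∑ l ∈ Finset.Icc 1 m, ‖f (k - m + l) l‖ ^ 2)
        ≤ ∑ _l ∈ Finset.Icc 1 m, F := Finset.sum_le_sum hfF
      _ = ((Finset.Icc 1 m).card : ℝ) * F := by rw [Finset.sum_const, nsmul_eq_mul]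
      _ = (m : ℝ) * F := by rw [Nat.card_Icc]; norm_num
  have hmT : (m : ℝ) * ω ≤ T := by
    rw [← hM]
    have : (m : ℝ) ≤ (M : ℝ) := by exact_mod_cast (by omega : m ≤ M)
    nlinarith
  have hmω : 0 ≤ (m : ℝ) * ω := by positivity
  have hfin : 2 * ω ^ 2 * m * ((m : ℝ) * F) ≤ 2 * T ^ 2 * F := by
    have h1 : ((m : ℝ) * ω) ^ 2 ≤ T ^ 2 := by nlinarith
    nlinarith [sq_nonneg ω]
  calc ‖u‖ ^ 2 ≤ 2 * ω ^ 2 * m * (∑ l ∈ Finset.Icc 1 m, ‖f (k - m + l) l‖ ^ 2)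
      + 2 * ‖β (k - m)‖ ^ 2 := hmain
    _ ≤ 2 * ω ^ 2 * m * ((m : ℝ) * F) + 2 * ‖β (k - m)‖ ^ 2 := by
        have h2 : (0:ℝ) ≤ 2 * ω ^ 2 * m := by positivity
        nlinarith [mul_le_mul_of_nonneg_left hsumF h2]
    _ ≤ 2 * T ^ 2 * F + 2 * ‖β (k - m)‖ ^ 2 := by linarith
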